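/- Lemma 32 (proper subDAG lemma; combined form): Let C be a graphoid of CI relations on [p], let G_τ be a minimal I-MAP with respect to C, and let H be a DAG that is Markov equivalent to G_τ and obtained from G_τ by reversing a single covered arrow. Suppose there is an arrow x → y of H whose deletion yields a DAG H' with CI(H') ⊆ C. Then for every linear extension π of H, the minimal I-MAP G_π is a proper subDAG of H: every arrow of G_π is an arrow of H and G_π has strictly fewer arrows than H. -/

import Mathlib

open scoped Classical

namespace GSP

/-- A DAG on the node set `Fin p`, given by its finite set of arrows,
which must form an acyclic relation. -/
structure DAG (p : ℕ) where
  arrows : Finset (Fin p × Fin p)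
  acyclic : ∀ i : Fin p, ¬ Relation.TransGen (fun a b => (a, b) ∈ arrows) i i

variable {p : ℕ}

namespace DAG

/-- `a → b` is an arrow of `G`. -/
def Arrow (G : DAG p) (a b : Fin p) : Prop := (a, b) ∈ G.arrows

/-- The number of arrows of `G`, denoted `|G|`. -/
def numArrows (G : DAG p) : ℕ := G.arrows.card

/-- The set of parents of a node `j` in `G`. -/
noncomputable def parents (G : DAG p) (j : Fin p) : Finset (Fin p) :=
  Finset.univ.filter fun i => G.Arrow i j

/-- Adjacency: `a` and `b` are joined by an arrow in some direction. -/
def Adj (G : DAG p) (a b : Fin p) : Prop := G.Arrow a b ∨ G.Arrow b a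

/-- `b` is a collider between `a` and `c`: both arrows point into `b`. -/
def Collider (G : DAG p) (a b c : Fin p) : Prop := G.Arrow a b ∧ G.Arrow c b

/-- `d` is a (reflexive) descendant of `a` in `G`. -/
def Desc (G : DAG p) (a d : Fin p) : Prop := Relation.ReflTransGen G.Arrow a d

/-- The list of nodes `l` is a d-connecting walk given `S`: consecutive nodes
are adjacent, every internal collider lies in `S` or has a descendant in `S`,
and no internal non-collider lies in `S`. -/
def DConnWalk (G : DAG p) (S : Finset (Fin p)) (l : List (Fin p)) : Prop :=
  l.Chain' G.Adj ∧
  ∀ (m : ℕ) (_ : 1 ≤ m) (h2 : m + 1 < l.length),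
    (G.Collider (l.get ⟨m - 1, by omega⟩) (l.get ⟨m, by omega⟩) (l.get ⟨m + 1, h2⟩) →
      ∃ d ∈ S, G.Desc (l.get ⟨m, by omega⟩) d) ∧
    (¬ G.Collider (l.get ⟨m - 1, by omega⟩) (l.get ⟨m, by omega⟩) (l.get ⟨m + 1, h2⟩) →
      l.get ⟨m, by omega⟩ ∉ S)

/-- `i` and `j` are d-connected given `S` in `G`. -/
def DConn (G : DAG p) (i j : Fin p) (S : Finset (Fin p)) : Prop :=
  ∃ l : List (Fin p), l.head? = some i ∧ l.getLast? = some j ∧ G.DConnWalk S l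

/-- `i` and `j` are d-separated given `S` in `G`. -/
def DSep (G : DAG p) (i j : Fin p) (S : Finset (Fin p)) : Prop := ¬ G.DConn i j S

end DAG

/-- A conditional independence (CI) relation `i ⊥ j | S` on `[p]`. -/
abbrev CIRel (p : ℕ) := Fin p × Fin p × Finset (Fin p)

/-- The set of CI relations encoded by the d-separations of `G`. -/
def CIof (G : DAG p) : Set (CIRel p) :=
  {t | t.1 ≠ t.2.1 ∧ t.1 ∉ t.2.2 ∧ t.2.1 ∉ t.2.2 ∧ G.DSep t.1 t.2.1 t.2.2}

/-- The symmetric closure of a set of CI relations. -/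
def symClosure (C : Set (CIRel p)) : Set (CIRel p) :=
  {t | t ∈ C ∨ (t.2.1, t.1, t.2.2) ∈ C}

/-- Symmetry of a set of CI relations. -/
def SymmetricCI (C : Set (CIRel p)) : Prop :=
  ∀ i j S, (i, j, S) ∈ C → (j, i, S) ∈ C

/-- A semigraphoid: symmetric and satisfying (SG2). -/
def Semigraphoid (C : Set (CIRel p)) : Prop :=
  SymmetricCI C ∧
  ∀ i j k S, (i, j, S) ∈ C → (i, k, insert j S) ∈ C →
    (i, k, S) ∈ C ∧ (i, j, insert k S) ∈ C

/-- A graphoid: a semigraphoid additionally satisfying intersection (INT). -/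
def Graphoid (C : Set (CIRel p)) : Prop :=
  Semigraphoid C ∧
  ∀ i j k S, (i, j, insert k S) ∈ C → (i, k, insert j S) ∈ C →
    (i, j, S) ∈ C ∧ (i, k, S) ∈ C

/-- Build a DAG from a relation compatible with a numeric ordering. -/
noncomputable def mkDAG (R : Fin p → Fin p → Prop) (f : Fin p → ℕ)
    (hf : ∀ a b, R a b → f a < f b) : DAG p where
  arrows := Finset.univ.filter fun e : Fin p × Fin p => R e.1 e.2
  acyclic := by
    intro i hi
    have key : ∀ a b : Fin p,
        Relation.TransGen (fun a b : Fin p =>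
          (a, b) ∈ Finset.univ.filter fun e : Fin p × Fin p => R e.1 e.2) a b →
        f a < f b := by
      intro a b h
      induction h with
      | single h => exact hf _ _ (by simpa using h)
      | tail _ h ih => exact lt_trans ih (hf _ _ (by simpa using h))
    exact lt_irrefl _ (key i i hi)

/-- The conditioning set `{π_1, …, π_j} \ {π_i, π_j}` (where `b = π_j` is the
later node and `a = π_i` the earlier one) used in the definition of minimal
I-MAPs. -/
noncomputable def condSet (π : Equiv.Perm (Fin p)) (a b : Fin p) : Finset (Fin p) :=
  ((Finset.univ.filter fun k : Fin p => π.symm k ≤ π.symm b).erase a).erase b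

/-- The minimal I-MAP `G_π` of a set `C` of CI relations with respect to the
permutation (ordering) `π`: there is an arrow `π_i → π_j` for positions `i < j`
iff `π_i ⊥ π_j | {π_1, …, π_j} \ {π_i, π_j}` is not in `C`. -/
noncomputable def minimalIMAP (C : Set (CIRel p)) (π : Equiv.Perm (Fin p)) : DAG p :=
  mkDAG (fun a b => π.symm a < π.symm b ∧ (a, b, condSet π a b) ∉ C)
    (fun a => (π.symm a : ℕ)) (fun a b h => by exact_mod_cast h.1)

/-- Markov equivalence of DAGs: equal sets of d-separation statements. -/
def MarkovEquiv (G H : DAG p) : Prop := CIof G = CIof H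

/-- `H` is an independence map of `G`, written `G ≤ H`: `CI(H) ⊆ CI(G)`. -/
def IMapLE (G H : DAG p) : Prop := CIof H ⊆ CIof G

/-- `π` is a linear extension of `G`: every arrow goes from an earlier to a
later element of `π`. -/
def IsLinExt (G : DAG p) (π : Equiv.Perm (Fin p)) : Prop :=
  ∀ a b, G.Arrow a b → π.symm a < π.symm b

/-- `a → b` is a covered arrow of `G`: `pa(a) = pa(b) \ {a}`. -/
def DAG.Covered (G : DAG p) (a b : Fin p) : Prop :=
  G.Arrow a b ∧ G.parents a = (G.parents b).erase a

/-- The minimal I-MAPs `G_σ` and `G_ρ` are connected by a covered arrow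
reversal: `ρ` is a linear extension of the DAG obtained from `G_σ` by
reversing one covered arrow of `G_σ`. -/
def CoveredReversalStep (C : Set (CIRel p)) (σ ρ : Equiv.Perm (Fin p)) : Prop :=
  ∃ a b : Fin p, (minimalIMAP C σ).Covered a b ∧
    ρ.symm b < ρ.symm a ∧
    ∀ x y : Fin p, (minimalIMAP C σ).Arrow x y → (x, y) ≠ (a, b) →
      ρ.symm x < ρ.symm y

/-- A weakly decreasing sequence of covered arrow reversals: a sequence of
minimal I-MAPs in which consecutive members are connected by covered arrow
reversals and the number of arrows never increases. -/
def WeaklyDecreasingSeq (C : Set (CIRel p)) (s : List (Equiv.Perm (Fin p))) : Prop :=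
  s.Chain' fun σ ρ => CoveredReversalStep C σ ρ ∧
    (minimalIMAP C ρ).numArrows ≤ (minimalIMAP C σ).numArrows

/-- Some weakly decreasing sequence of covered arrow reversals starting at
`G_π` reaches a minimal I-MAP with strictly fewer arrows. -/
def EscapesByCoveredReversals (C : Set (CIRel p)) (π : Equiv.Perm (Fin p)) : Prop :=
  ∃ (s : List (Equiv.Perm (Fin p))) (τ : Equiv.Perm (Fin p)),
    s.head? = some π ∧ s.getLast? = some τ ∧ WeaklyDecreasingSeq C s ∧
    (minimalIMAP C τ).numArrows < (minimalIMAP C π).numArrows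

/-- The TSP assumption of `C` with respect to `G`. -/
def TSP (C : Set (CIRel p)) (G : DAG p) : Prop :=
  CIof G ⊆ C ∧
  ∀ π : Equiv.Perm (Fin p), ¬ EscapesByCoveredReversals C π →
    MarkovEquiv (minimalIMAP C π) G

/-- The SMR assumption of `C` with respect to `G`. -/
def SMR (C : Set (CIRel p)) (G : DAG p) : Prop :=
  CIof G ⊆ C ∧
  ∀ H : DAG p, CIof H ⊆ C → ¬ MarkovEquiv H G → G.numArrows < H.numArrows

end GSP

namespace GSP

variable {p : ℕ}

lemma DAG.not_arrow_self' (G : DAG p) (a : Fin p) : ¬ G.Arrow a a := fun h =>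
  G.acyclic a (Relation.TransGen.single h)

lemma DAG.no_two_cycle' (G : DAG p) {a b : Fin p} (h1 : G.Arrow a b)
    (h2 : G.Arrow b a) : False :=
  G.acyclic a ((Relation.TransGen.single h1).tail h2)

lemma desc_le' {K : DAG p} {π : Equiv.Perm (Fin p)} (hlin : IsLinExt K π)
    {a d : Fin p} (h : K.Desc a d) : π.symm a ≤ π.symm d := by
  induction h with
  | refl => exact le_refl _
  | tail _ h ih => exact le_of_lt (lt_of_le_of_lt ih (hlin _ _ h))

lemma mem_condSet' {π : Equiv.Perm (Fin p)} {u v k : Fin p} :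
    k ∈ condSet π u v ↔ π.symm k ≤ π.symm v ∧ k ≠ u ∧ k ≠ v := by
  simp only [condSet, Finset.mem_erase, Finset.mem_filter, Finset.mem_univ, true_and]
  tauto

/-- Ordered local Markov property: in a DAG `K` with linear extension `π`,
two non-adjacent nodes `u` (earlier) and `v` are d-separated given the set of
predecessors of `v` other than `u`. -/
lemma dsep_of_not_adj (K : DAG p) (π : Equiv.Perm (Fin p)) (hlin : IsLinExt K π)
    (u v : Fin p) (huv : π.symm u < π.symm v) (hadj : ¬ K.Adj u v) :
    K.DSep u v (condSet π u v) := by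
  suffices H : ∀ n : ℕ, ∀ l : List (Fin p), l.length = n → l.head? = some u →
      l.getLast? = some v → K.DConnWalk (condSet π u v) l → False by
    rintro ⟨l, h1, h2, h3⟩
    exact H l.length l rfl h1 h2 h3
  intro n
  induction n using Nat.strong_induction_on with
  | _ n ih =>
  intro l hn h1 h2 h3
  have hne : l ≠ [] := by rintro rfl; simp at h1
  have hn1 : 1 ≤ n := by rw [← hn]; exact List.length_pos_iff.mpr hne
  set idx : ℕ → Fin p := fun m => l.getD m u with hidxdef
  have hidx : ∀ (m : ℕ) (h : m < n), idx m = l[m]'(by omega) := by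
    intro m h
    exact List.getD_eq_getElem l u (by omega)
  have hu0 : idx 0 = u := by
    cases l with
    | nil => simp at h1
    | cons a t => simp only [List.head?_cons, Option.some.injEq] at h1; simpa [hidxdef] using h1
  have hvlast : idx (n - 1) = v := by
    rw [List.getLast?_eq_getLast hne, Option.some.injEq, List.getLast_eq_getElem] at h2
    have hl1 : l.length - 1 = n - 1 := by omega
    simp only [hl1] at h2
    rw [hidx (n - 1) (by omega)]
    exact h2
  have hchain : ∀ i, i + 1 < n → K.Adj (idx i) (idx (i + 1)) := by
    intro i hi
    have h := List.isChain_iff_getElem.mp h3.1 i (by omega)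
    rw [hidx i (by omega), hidx (i + 1) (by omega)]
    exact h
  have hwin : ∀ m, 1 ≤ m → m + 1 < n →
      (K.Collider (idx (m - 1)) (idx m) (idx (m + 1)) →
        ∃ d ∈ condSet π u v, K.Desc (idx m) d) ∧
      (¬ K.Collider (idx (m - 1)) (idx m) (idx (m + 1)) →
        idx m ∉ condSet π u v) := by
    intro m h1m h2m
    have h := h3.2 m h1m (by omega)
    rw [hidx (m - 1) (by omega), hidx m (by omega), hidx (m + 1) (by omega)]
    simp only [List.get_eq_getElem] at h
    exact h
  rcases Nat.lt_or_ge n 3 with h3n | h3n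
  · -- n = 1 or n = 2
    have : n = 1 ∨ n = 2 := by omega
    rcases this with rfl | rfl
    · have : u = v := by rw [← hu0, ← hvlast]
      exact absurd huv (by rw [this]; exact lt_irrefl _)
    · have h := hchain 0 (by omega)
      rw [hu0, show (0 + 1 : ℕ) = 2 - 1 from rfl, hvlast] at h
      exact hadj h
  · by_cases hocc : ∃ m, 1 ≤ m ∧ m + 1 < n ∧ (idx m = u ∨ idx m = v)
    · obtain ⟨m, hm1, hm2, hm3⟩ := hocc
      rcases hm3 with hmu | hmv
      · -- u occurs internally: recurse on the suffix from m
        have hlen : (l.drop m).length = n - m := by rw [List.length_drop, hn]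
        have hdropget : ∀ (j : ℕ) (hj : j < (l.drop m).length),
            (l.drop m)[j] = idx (m + j) := by
          intro j hj
          rw [List.getElem_drop]
          exact (hidx (m + j) (by rw [hlen] at hj; omega)).symm
        have hdne : l.drop m ≠ [] := by
          rw [← List.length_pos_iff, hlen]; omega
        refine ih (n - m) (by omega) (l.drop m) hlen ?_ ?_ ⟨h3.1.drop m, ?_⟩
        · rw [List.head?_eq_head hdne, Option.some.injEq, List.head_eq_getElem,
            hdropget 0 (by rw [hlen]; omega)]
          simpa using hmu
        · rw [List.getLast?_eq_getLast hdne, Option.some.injEq,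
            List.getLast_eq_getElem]
          simp only [hlen]
          rw [hdropget (n - m - 1) (by rw [hlen]; omega),
            show m + (n - m - 1) = n - 1 from by omega]
          exact hvlast
        · intro m' h1' h2'
          simp only [List.get_eq_getElem]
          rw [hdropget (m' - 1) (by omega), hdropget m' (by omega),
            hdropget (m' + 1) h2']
          rw [show m + (m' - 1) = (m + m') - 1 from by omega,
            show m + (m' + 1) = (m + m') + 1 from by omega]
          exact hwin (m + m') (by omega) (by rw [hlen] at h2'; omega)
      · -- v occurs internally: recurse on the prefix up to m
        have hlen : (l.take (m + 1)).length = m + 1 := by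
          rw [List.length_take, hn]; omega
        have htakeget : ∀ (j : ℕ) (hj : j < (l.take (m + 1)).length),
            (l.take (m + 1))[j] = idx j := by
          intro j hj
          rw [List.getElem_take]
          exact (hidx j (by rw [hlen] at hj; omega)).symm
        have hdne : l.take (m + 1) ≠ [] := by
          rw [← List.length_pos_iff, hlen]; omega
        refine ih (m + 1) (by omega) (l.take (m + 1)) hlen ?_ ?_ ⟨h3.1.take _, ?_⟩
        · rw [List.head?_eq_head hdne, Option.some.injEq, List.head_eq_getElem,
            htakeget 0 (by rw [hlen]; omega)]
          exact hu0
        · rw [List.getLast?_eq_getLast hdne, Option.some.injEq,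
            List.getLast_eq_getElem]
          simp only [hlen]
          rw [htakeget (m + 1 - 1) (by rw [hlen]; omega),
            show m + 1 - 1 = m from by omega]
          exact hmv
        · intro m' h1' h2'
          simp only [List.get_eq_getElem]
          rw [htakeget (m' - 1) (by omega), htakeget m' (by omega),
            htakeget (m' + 1) h2']
          exact hwin m' h1' (by rw [hlen] at h2'; omega)
    · -- no internal occurrence of u or v: maximum argument
      push_neg at hocc
      obtain ⟨M, hMs, hMmax⟩ := Finset.exists_max_image (Finset.Ico 1 (n - 1))
        (fun m => (π.symm (idx m) : ℕ)) ⟨1, by rw [Finset.mem_Ico]; omega⟩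
      rw [Finset.mem_Ico] at hMs
      have hmax : ∀ m, 1 ≤ m → m < n - 1 →
          (π.symm (idx m) : ℕ) ≤ (π.symm (idx M) : ℕ) := by
        intro m a b
        exact hMmax m (Finset.mem_Ico.mpr ⟨a, b⟩)
      have hMu : idx M ≠ u := by
        intro h
        exact (hocc M hMs.1 (by omega)).1 h
      have hMv : idx M ≠ v := by
        intro h
        exact (hocc M hMs.1 (by omega)).2 h
      by_cases hcol : K.Collider (idx (M - 1)) (idx M) (idx (M + 1))
      · obtain ⟨d, hd, hdesc⟩ := (hwin M hMs.1 (by omega)).1 hcol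
        rw [mem_condSet'] at hd
        have hdv : π.symm d < π.symm v :=
          lt_of_le_of_ne hd.1 (fun h => hd.2.2 (π.symm.injective h))
        have hMltv : (π.symm (idx M) : ℕ) < (π.symm v : ℕ) := by
          have hd1 := desc_le' hlin hdesc
          rw [Fin.le_def] at hd1
          rw [Fin.lt_def] at hdv
          omega
        have hallcol : ∀ m, 1 ≤ m → m + 1 < n →
            K.Collider (idx (m - 1)) (idx m) (idx (m + 1)) := by
          intro m a b
          by_contra hnc
          apply (hwin m a b).2 hnc
          rw [mem_condSet']
          refine ⟨?_, fun h => (hocc m a b).1 h, fun h => (hocc m a b).2 h⟩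
          rw [Fin.le_def]
          have := hmax m a (by omega)
          omega
        rcases Nat.lt_or_ge n 4 with h4 | h4
        · -- n = 3
          have hc := hallcol 1 le_rfl (by omega)
          have h2v : idx (1 + 1) = v := by
            rw [← hvlast]; congr 1; omega
          have hlt := hlin _ _ hc.2
          rw [h2v] at hlt
          rw [Fin.lt_def] at hlt
          have hM1 : M = 1 := by omega
          rw [hM1] at hMltv
          omega
        · have hc1 := hallcol 1 le_rfl (by omega)
          have hc2 := hallcol 2 (by omega) (by omega)
          exact K.no_two_cycle' hc2.1 hc1.2
      · have hns := (hwin M hMs.1 (by omega)).2 hcol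
        have hMgt : (π.symm v : ℕ) < (π.symm (idx M) : ℕ) := by
          by_contra hle
          push_neg at hle
          exact hns (mem_condSet'.mpr ⟨by rw [Fin.le_def]; omega, hMu, hMv⟩)
        have huvN : (π.symm u : ℕ) < (π.symm v : ℕ) := by
          rw [Fin.lt_def] at huv; exact huv
        have hL : K.Arrow (idx (M - 1)) (idx M) := by
          have hadjL := hchain (M - 1) (by omega)
          rw [show M - 1 + 1 = M from by omega] at hadjL
          rcases hadjL with h | h
          · exact h
          · exfalso
            have hlt := hlin _ _ h
            rw [Fin.lt_def] at hlt
            by_cases hM1 : M = 1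
            · rw [hM1, show (1 : ℕ) - 1 = 0 from rfl, hu0] at hlt
              rw [hM1] at hMgt
              omega
            · have := hmax (M - 1) (by omega) (by omega)
              omega
        have hR : K.Arrow (idx (M + 1)) (idx M) := by
          have hadjR := hchain M (by omega)
          rcases hadjR with h | h
          · exfalso
            have hlt := hlin _ _ h
            rw [Fin.lt_def] at hlt
            by_cases hMn : M + 1 = n - 1
            · rw [hMn, hvlast] at hlt
              omega
            · have := hmax (M + 1) (by omega) (by omega)
              omega
          · exact h
        exact hcol ⟨hL, hR⟩

/-- Lemma 32, proper subDAG lemma, combined form: let `C`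
be a graphoid, `G_τ` a minimal I-MAP w.r.t. `C`, and `H` a DAG Markov
equivalent to `G_τ` and obtained from `G_τ` by reversing a single covered
arrow `a → b`. Suppose some arrow `x → y` of `H` can be deleted to give a DAG
`H'` with `CI(H') ⊆ C`. Then for every linear extension `π` of `H`, the
minimal I-MAP `G_π` is a proper subDAG of `H`: every arrow of `G_π` is an
arrow of `H`, and `G_π` has strictly fewer arrows than `H`. -/
theorem minimalIMAP_of_linext_is_proper_subDAG
    (p : ℕ) (C : Set (CIRel p)) (hC : Graphoid C)
    (τ : Equiv.Perm (Fin p)) (H : DAG p) (a b : Fin p)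
    (hcov : (minimalIMAP C τ).Covered a b)
    (hH : H.arrows = insert (b, a) ((minimalIMAP C τ).arrows.erase (a, b)))
    (hME : MarkovEquiv H (minimalIMAP C τ))
    (x y : Fin p) (hxyH : (x, y) ∈ H.arrows)
    (H' : DAG p) (hH' : H'.arrows = H.arrows.erase (x, y))
    (hH'C : CIof H' ⊆ C)
    (π : Equiv.Perm (Fin p)) (hlin : IsLinExt H π) :
    (minimalIMAP C π).arrows ⊆ H.arrows ∧
    (minimalIMAP C π).numArrows < H.numArrows := by
  have hlin' : IsLinExt H' π := by
    intro a' b' h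
    apply hlin
    rw [DAG.Arrow, hH'] at h
    exact Finset.mem_of_mem_erase h
  have key : ∀ w z : Fin p, π.symm w < π.symm z → (w, z) ∉ H'.arrows →
      (z, w) ∉ H'.arrows → (w, z, condSet π w z) ∈ C := by
    intro w z hlt h1 h2
    apply hH'C
    exact ⟨fun h => absurd hlt (by rw [show w = z from h]; exact lt_irrefl _),
      fun hm => (mem_condSet'.mp hm).2.1 rfl,
      fun hm => (mem_condSet'.mp hm).2.2 rfl,
      dsep_of_not_adj H' π hlin' w z hlt (fun hA => hA.elim h1 h2)⟩
  have hGmem : ∀ e : Fin p × Fin p, e ∈ (minimalIMAP C π).arrows ↔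
      (π.symm e.1 < π.symm e.2 ∧ (e.1, e.2, condSet π e.1 e.2) ∉ C) := by
    intro e
    simp [minimalIMAP, mkDAG]
  have hyx : π.symm x < π.symm y := hlin x y hxyH
  have hsub : (minimalIMAP C π).arrows ⊆ H.arrows.erase (x, y) := by
    intro e he
    rw [hGmem] at he
    rw [Finset.mem_erase]
    constructor
    · intro heq
      subst heq
      apply he.2
      apply key x y hyx
      · rw [hH']
        exact Finset.notMem_erase _ _
      · intro h
        rw [hH'] at h
        exact absurd (hlin y x (Finset.mem_of_mem_erase h)) (lt_asymm hyx)
    · by_contra hne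
      apply he.2
      have h1 : (e.1, e.2) ∉ H'.arrows := by
        intro h
        rw [hH'] at h
        apply hne
        have := Finset.mem_of_mem_erase h
        simpa using this
      have h2 : (e.2, e.1) ∉ H'.arrows := by
        intro h
        rw [hH'] at h
        exact absurd (hlin e.2 e.1 (Finset.mem_of_mem_erase h)) (lt_asymm he.1)
      exact key e.1 e.2 he.1 h1 h2
  refine ⟨hsub.trans (Finset.erase_subset _ _), ?_⟩
  have h1 := Finset.card_le_card hsub
  have h2 := Finset.card_lt_card (Finset.erase_ssubset hxyH)
  simpa [DAG.numArrows] using lt_of_le_of_lt h1 h2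

end GSP
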